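/- Let (X_n) be i.i.d. discrete nonnegative random variables with p := P[X_1 = 0] ∈ (0,1) and x_min := inf{a > 0 : P[X_1 = a] > 0} > 0. Fix x > 0 and define Λ(λ) = log E[e^{λX_1}] for λ ≤ 0. Then for any C > 1 and all n large enough: log p ≤ (1/n) log P[S_n ≤ x] ≤ log p + C (x/x_min) (log n)/n. -/

import Mathlib

open MeasureTheory ProbabilityTheory Filter Set
open scoped ENNReal Topology

theorem stmt19
    {Ω : Type*} [MeasurableSpace Ω] (P : Measure Ω) [IsProbabilityMeasure P]
    (X : ℕ → Ω → ℝ)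
    (hmeas : ∀ i, Measurable (X i))
    (hindep : iIndepFun X P)
    (hident : ∀ i, IdentDistrib (X i) (X 0) P P)
    (hnonneg : ∀ i ω, 0 ≤ X i ω)
    (hdiscrete : ∃ s : Set ℝ, s.Countable ∧ P (X 0 ⁻¹' s) = 1)
    (p : ℝ) (hp : p = (P {ω | X 0 ω = 0}).toReal)
    (hp0 : 0 < p) (hp1 : p < 1)
    (xmin : ℝ)
    (hxm : xmin = sInf {b : ℝ | 0 < b ∧ P (X 0 ⁻¹' {b}) ≠ 0})
    (hxmpos : 0 < xmin)
    (hsupp : ∀ᵐ ω ∂P, X 0 ω = 0 ∨ xmin ≤ X 0 ω)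
    (x : ℝ) (hx : 0 < x) :
    ∀ C : ℝ, 1 < C → ∀ᶠ n : ℕ in atTop,
      Real.log p ≤
          (1 / (n : ℝ)) *
            Real.log (P {ω | ∑ i ∈ Finset.range n, X i ω ≤ x}).toReal ∧
      (1 / (n : ℝ)) *
          Real.log (P {ω | ∑ i ∈ Finset.range n, X i ω ≤ x}).toReal ≤
        Real.log p + C * (x / xmin) * Real.log (n : ℝ) / (n : ℝ) := by
  intro C hC
  set q : ℝ≥0∞ := P {ω | X 0 ω = 0} with hq
  have hqe : ∀ i, P (X i ⁻¹' {0}) = q := fun i =>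
    (hident i).measure_mem_eq (measurableSet_singleton 0)
  have hptoReal : q.toReal = p := hp.symm
  have hkey : ∀ T : Finset ℕ, P (⋂ i ∈ T, X i ⁻¹' {0}) = q ^ T.card := by
    intro T
    rw [hindep.meas_biInter (fun i _ => ⟨{0}, measurableSet_singleton 0, rfl⟩)]
    rw [Finset.prod_congr rfl (fun i _ => hqe i), Finset.prod_const]
  set k : ℕ := ⌊x / xmin⌋₊ with hk
  have hxxm : 0 ≤ x / xmin := by positivity
  have hkle : (k : ℝ) ≤ x / xmin := Nat.floor_le hxxm
  have hlogp_neg : Real.log p < 0 := Real.log_neg hp0 hp1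
  -- good event
  set S : Set ℝ := {0} ∪ Set.Ici xmin with hS
  have hSmeas : MeasurableSet S := (measurableSet_singleton 0).union measurableSet_Ici
  set G : Set Ω := ⋂ i, X i ⁻¹' S with hG
  have hPGc : P Gᶜ = 0 := by
    rw [hG, Set.compl_iInter]
    refine measure_iUnion_null fun i => ?_
    have h0 : P (X 0 ⁻¹' Sᶜ) = 0 := by
      have : ∀ᵐ ω ∂P, X 0 ω ∈ S := by
        filter_upwards [hsupp] with ω hω
        rcases hω with h | h
        · exact Or.inl h
        · exact Or.inr h
      exact ae_iff.1 this
    have := (hident i).measure_mem_eq hSmeas.compl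
    rw [← Set.preimage_compl, this, h0]
  have hCx : 0 < (C - 1) * (x / xmin) := by
    apply mul_pos (by linarith) (div_pos hx hxmpos)
  set K : ℝ := (k : ℝ) * (-Real.log p) / ((C - 1) * (x / xmin)) with hK
  have hlogn : ∀ᶠ n : ℕ in atTop, K ≤ Real.log n :=
    (Real.tendsto_log_atTop.comp tendsto_natCast_atTop_atTop).eventually_ge_atTop K
  filter_upwards [hlogn, eventually_ge_atTop (k + 1)] with n hKn hn
  have hkn : k ≤ n := by omega
  have hn1 : 1 ≤ n := by omega
  have hnR : (1 : ℝ) ≤ (n : ℝ) := by exact_mod_cast hn1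
  have hnpos : (0 : ℝ) < (n : ℝ) := by linarith
  have hlognn : 0 ≤ Real.log n := Real.log_nonneg hnR
  set A : Set Ω := {ω | ∑ i ∈ Finset.range n, X i ω ≤ x} with hA
  -- lower bound
  have hsub : (⋂ i ∈ Finset.range n, X i ⁻¹' {0}) ⊆ A := by
    intro ω hω
    simp only [Set.mem_iInter, Set.mem_preimage, Set.mem_singleton_iff] at hω
    have hz : ∑ i ∈ Finset.range n, X i ω = 0 :=
      Finset.sum_eq_zero fun i hi => hω i hi
    simp [hA, Set.mem_setOf_eq, hz, hx.le]
  have hlow : q ^ n ≤ P A := by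
    have := measure_mono (μ := P) hsub
    rwa [hkey, Finset.card_range] at this
  have hlowR : p ^ n ≤ (P A).toReal := by
    have := ENNReal.toReal_mono (measure_ne_top _ _) hlow
    rwa [ENNReal.toReal_pow, hptoReal] at this
  have hApos : 0 < (P A).toReal := lt_of_lt_of_le (pow_pos hp0 n) hlowR
  have hlog_low : (n : ℝ) * Real.log p ≤ Real.log (P A).toReal := by
    rw [← Real.log_pow]
    exact Real.log_le_log (pow_pos hp0 n) hlowR
  constructor
  · calc Real.log p = (1 / (n : ℝ)) * ((n : ℝ) * Real.log p) := by
          field_simp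
      _ ≤ (1 / (n : ℝ)) * Real.log (P A).toReal :=
          mul_le_mul_of_nonneg_left hlog_low (by positivity)
  -- upper bound
  · have hgood : A ∩ G ⊆
        ⋃ T ∈ Finset.powersetCard (n - k) (Finset.range n), (⋂ i ∈ T, X i ⁻¹' {0}) := by
      rintro ω ⟨hωA, hωG⟩
      have hωS : ∀ i, X i ω = 0 ∨ xmin ≤ X i ω := by
        intro i
        have := Set.mem_iInter.1 hωG i
        simpa [hS] using this
      set N := (Finset.range n).filter (fun i => ¬ X i ω = 0) with hN
      have hNsum : (N.card : ℝ) * xmin ≤ x := by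
        calc (N.card : ℝ) * xmin = ∑ _i ∈ N, xmin := by
              rw [Finset.sum_const, nsmul_eq_mul]
          _ ≤ ∑ i ∈ N, X i ω := by
              refine Finset.sum_le_sum fun i hi => ?_
              rcases hωS i with h | h
              · exact absurd h (Finset.mem_filter.1 hi).2
              · exact h
          _ ≤ ∑ i ∈ Finset.range n, X i ω :=
              Finset.sum_le_sum_of_subset_of_nonneg (Finset.filter_subset _ _)
                (fun i _ _ => hnonneg i ω)
          _ ≤ x := hωA
      have hNk : N.card ≤ k := by
        apply Nat.le_floor
        rw [le_div_iff₀ hxmpos]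
        exact hNsum
      have hZ : n - k ≤ ((Finset.range n).filter (fun i => X i ω = 0)).card := by
        have hsplit : ((Finset.range n).filter (fun i => X i ω = 0)).card + N.card = n := by
          rw [hN, Finset.card_filter_add_card_filter_not, Finset.card_range]
        omega
      obtain ⟨T, hTsub, hTcard⟩ := Finset.exists_subset_card_eq hZ
      refine Set.mem_biUnion (Finset.mem_powersetCard.2
        ⟨hTsub.trans (Finset.filter_subset _ _), hTcard⟩) ?_
      simp only [Set.mem_iInter, Set.mem_preimage, Set.mem_singleton_iff]
      intro i hi
      exact (Finset.mem_filter.1 (hTsub hi)).2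
    have hup : P A ≤ (n.choose k : ℝ≥0∞) * q ^ (n - k) := by
      calc P A ≤ P ((A ∩ G) ∪ Gᶜ) := by
            refine measure_mono fun ω hω => ?_
            by_cases h : ω ∈ G
            · exact Or.inl ⟨hω, h⟩
            · exact Or.inr h
        _ ≤ P (A ∩ G) + P Gᶜ := measure_union_le _ _
        _ = P (A ∩ G) := by rw [hPGc, add_zero]
        _ ≤ ∑ T ∈ Finset.powersetCard (n - k) (Finset.range n), P (⋂ i ∈ T, X i ⁻¹' {0}) :=
            le_trans (measure_mono hgood) (measure_biUnion_finset_le _ _)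
        _ = ∑ _T ∈ Finset.powersetCard (n - k) (Finset.range n), q ^ (n - k) :=
            Finset.sum_congr rfl (fun T hT => by
              rw [hkey, (Finset.mem_powersetCard.1 hT).2])
        _ = ((Finset.powersetCard (n - k) (Finset.range n)).card : ℝ≥0∞) * q ^ (n - k) := by
            rw [Finset.sum_const, nsmul_eq_mul]
        _ = (n.choose k : ℝ≥0∞) * q ^ (n - k) := by
            rw [Finset.card_powersetCard, Finset.card_range, Nat.choose_symm hkn]
    have hupR : (P A).toReal ≤ (n.choose k : ℝ) * p ^ (n - k) := by
      have hne : (n.choose k : ℝ≥0∞) * q ^ (n - k) ≠ ⊤ :=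
        ENNReal.mul_ne_top (ENNReal.natCast_ne_top _) (ENNReal.pow_ne_top (measure_ne_top _ _))
      have := ENNReal.toReal_mono hne hup
      rwa [ENNReal.toReal_mul, ENNReal.toReal_pow, ENNReal.toReal_natCast, hptoReal] at this
    have hupR2 : (P A).toReal ≤ (n : ℝ) ^ k * p ^ (n - k) := by
      refine hupR.trans (mul_le_mul_of_nonneg_right ?_ (by positivity))
      calc ((n.choose k : ℕ) : ℝ) ≤ ((n ^ k : ℕ) : ℝ) := by exact_mod_cast Nat.choose_le_pow n k
        _ = (n : ℝ) ^ k := by push_cast; ring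
    have hlogup : Real.log (P A).toReal ≤ (k : ℝ) * Real.log n + ((n : ℝ) - k) * Real.log p := by
      have h := Real.log_le_log hApos hupR2
      rwa [Real.log_mul (by positivity) (by positivity), Real.log_pow, Real.log_pow,
        Nat.cast_sub hkn] at h
    have hmain : (k : ℝ) * Real.log n + ((n : ℝ) - k) * Real.log p ≤
        (n : ℝ) * Real.log p + C * (x / xmin) * Real.log n := by
      have h1 : (k : ℝ) * Real.log n ≤ (x / xmin) * Real.log n :=
        mul_le_mul_of_nonneg_right hkle hlognn
      have h2 : (k : ℝ) * (-Real.log p) ≤ (C - 1) * (x / xmin) * Real.log n := by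
        have heq : (k : ℝ) * (-Real.log p) = ((C - 1) * (x / xmin)) * K := by
          have e1 : xmin ≠ 0 := ne_of_gt hxmpos
          have e2 : C - 1 ≠ 0 := by linarith
          have e3 : x ≠ 0 := ne_of_gt hx
          rw [hK]; field_simp
        rw [heq]
        exact mul_le_mul_of_nonneg_left hKn hCx.le
      nlinarith
    calc (1 / (n : ℝ)) * Real.log (P A).toReal
        ≤ (1 / (n : ℝ)) * ((n : ℝ) * Real.log p + C * (x / xmin) * Real.log n) :=
          mul_le_mul_of_nonneg_left (hlogup.trans hmain) (by positivity)
      _ = Real.log p + C * (x / xmin) * Real.log n / (n : ℝ) := by field_simp
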